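/- Let d ≥ 3, n = (n₁,…,n_d) with each n_j ≥ 1, F = ℝ or ℂ, and let T ∈ F^{n₁×⋯×n_d} satisfy ‖T‖ = 1. If either ‖T‖_{1,F} = α(n,F) or ‖T‖_{∞,F} = β(n,F), then ‖T‖_{1,F}·‖T‖_{∞,F} = 1. In particular, ‖T‖_{1,F} = α(n,F) if and only if ‖T‖_{∞,F} = β(n,F). -/

import Mathlib

noncomputable section


/-- The Euclidean norm of a vector in `𝕜^k`. -/
def vnorm {𝕜 : Type*} [RCLike 𝕜] {k : ℕ} (x : Fin k → 𝕜) : ℝ :=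
  Real.sqrt (∑ i, ‖x i‖ ^ 2)

/-- The rank-one tensor `x₁ ⊗ ⋯ ⊗ x_d`. -/
def rankOne {𝕜 : Type*} [RCLike 𝕜] {d : ℕ} {n : Fin d → ℕ}
    (x : ∀ j, Fin (n j) → 𝕜) : (∀ j, Fin (n j)) → 𝕜 :=
  fun i => ∏ j, x j (i j)

/-- The standard inner product `⟨T, Y⟩ = ∑ tᵢ · conj yᵢ` of tensors. -/
def tinner {𝕜 : Type*} [RCLike 𝕜] {d : ℕ} {n : Fin d → ℕ}
    (T Y : (∀ j, Fin (n j)) → 𝕜) : 𝕜 :=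
  ∑ i, T i * (starRingEnd 𝕜) (Y i)

/-- The Hilbert–Schmidt norm of a tensor. -/
def hsNorm {𝕜 : Type*} [RCLike 𝕜] {d : ℕ} {n : Fin d → ℕ}
    (T : (∀ j, Fin (n j)) → 𝕜) : ℝ :=
  Real.sqrt (∑ i, ‖T i‖ ^ 2)

/-- The spectral norm of a tensor:
`max {|⟨T, x₁⊗⋯⊗x_d⟩| : ‖x_j‖ = 1 for all j}`. -/
def specNorm {𝕜 : Type*} [RCLike 𝕜] {d : ℕ} {n : Fin d → ℕ}
    (T : (∀ j, Fin (n j)) → 𝕜) : ℝ :=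
  sSup {r : ℝ | ∃ x : ∀ j, Fin (n j) → 𝕜, (∀ j, vnorm (x j) = 1) ∧
    r = ‖tinner T (rankOne x)‖}

/-- The nuclear norm of a tensor:
`min {∑ᵢ ∏ⱼ ‖x_{i,j}‖ : T = ∑ᵢ x_{i,1}⊗⋯⊗x_{i,d}}`. -/
def nucNorm {𝕜 : Type*} [RCLike 𝕜] {d : ℕ} {n : Fin d → ℕ}
    (T : (∀ j, Fin (n j)) → 𝕜) : ℝ :=
  sInf {r : ℝ | ∃ (m : ℕ) (x : Fin m → ∀ j, Fin (n j) → 𝕜),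
    T = (∑ i, rankOne (x i)) ∧ r = ∑ i, ∏ j, vnorm (x i j)}

/-- `α(n, 𝕜)`: the maximal nuclear norm of a tensor of Hilbert–Schmidt norm one. -/
def alphaN (𝕜 : Type*) [RCLike 𝕜] (d : ℕ) (n : Fin d → ℕ) : ℝ :=
  sSup {r : ℝ | ∃ T : (∀ j, Fin (n j)) → 𝕜, hsNorm T = 1 ∧ r = nucNorm T}

/-- `β(n, 𝕜)`: the minimal spectral norm of a tensor of Hilbert–Schmidt norm one. -/
def betaN (𝕜 : Type*) [RCLike 𝕜] (d : ℕ) (n : Fin d → ℕ) : ℝ :=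
  sInf {r : ℝ | ∃ T : (∀ j, Fin (n j)) → 𝕜, hsNorm T = 1 ∧ r = specNorm T}

section Aux

open scoped ComplexConjugate

variable {𝕜 : Type*} [RCLike 𝕜] {d : ℕ} {n : Fin d → ℕ}

variable {𝕜 : Type*} [RCLike 𝕜] {d : ℕ} {n : Fin d → ℕ}

def toE (T : (∀ j, Fin (n j)) → 𝕜) : EuclideanSpace 𝕜 (∀ j, Fin (n j)) := WithLp.toLp 2 T

lemma hsNorm_eq (T : (∀ j, Fin (n j)) → 𝕜) : hsNorm T = ‖toE T‖ := by
  rw [EuclideanSpace.norm_eq]; rfl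

lemma tinner_eq (T Y : (∀ j, Fin (n j)) → 𝕜) :
    tinner T Y = @inner 𝕜 _ _ (toE Y) (toE T) := by
  rw [PiLp.inner_apply]
  simp only [RCLike.inner_apply, tinner]
  exact Finset.sum_congr rfl fun i _ => rfl

lemma norm_tinner_le (T Y : (∀ j, Fin (n j)) → 𝕜) :
    ‖tinner T Y‖ ≤ hsNorm T * hsNorm Y := by
  rw [tinner_eq, hsNorm_eq, hsNorm_eq, mul_comm]
  exact norm_inner_le_norm _ _

lemma tinner_self (T : (∀ j, Fin (n j)) → 𝕜) :
    tinner T T = ((hsNorm T : 𝕜))^2 := by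
  rw [tinner_eq, hsNorm_eq, inner_self_eq_norm_sq_to_K]

lemma vnorm_nonneg {k : ℕ} (x : Fin k → 𝕜) : 0 ≤ vnorm x := Real.sqrt_nonneg _

lemma vnorm_sq {k : ℕ} (x : Fin k → 𝕜) : vnorm x ^ 2 = ∑ i, ‖x i‖^2 :=
  Real.sq_sqrt (by positivity)

lemma hsNorm_nonneg (T : (∀ j, Fin (n j)) → 𝕜) : 0 ≤ hsNorm T := Real.sqrt_nonneg _

lemma hsNorm_sq (T : (∀ j, Fin (n j)) → 𝕜) : hsNorm T ^ 2 = ∑ i, ‖T i‖^2 :=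
  Real.sq_sqrt (by positivity)

lemma vnorm_eq_zero {k : ℕ} {x : Fin k → 𝕜} (h : vnorm x = 0) : x = 0 := by
  have h2 : ∑ i, ‖x i‖^2 = 0 := by
    have := vnorm_sq x; rw [h] at this; simpa using this.symm
  funext i
  have := (Finset.sum_eq_zero_iff_of_nonneg (fun i _ => by positivity)).1 h2 i (Finset.mem_univ i)
  simpa using this

lemma hsNorm_eq_zero {T : (∀ j, Fin (n j)) → 𝕜} (h : hsNorm T = 0) : T = 0 := by
  rw [hsNorm_eq] at h
  have : toE T = 0 := norm_eq_zero.1 h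
  funext i
  have := congrArg (fun v => v.ofLp i) this
  simpa [toE] using this

lemma vnorm_smul {k : ℕ} (c : 𝕜) (x : Fin k → 𝕜) : vnorm (c • x) = ‖c‖ * vnorm x := by
  simp only [vnorm, Pi.smul_apply, smul_eq_mul, norm_mul, mul_pow, ← Finset.mul_sum]
  rw [Real.sqrt_mul (by positivity), Real.sqrt_sq (norm_nonneg c)]

lemma rankOne_smul (c : ∀ j, 𝕜) (x : ∀ j, Fin (n j) → 𝕜) :
    rankOne (fun j => c j • x j) = (∏ j, c j) • rankOne x := by
  funext i
  simp [rankOne, Finset.prod_mul_distrib, smul_eq_mul]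

lemma norm_rankOne_sq (x : ∀ j, Fin (n j) → 𝕜) (i : ∀ j, Fin (n j)) :
    ‖rankOne x i‖^2 = ∏ j, ‖x j (i j)‖^2 := by
  simp [rankOne, norm_prod, Finset.prod_pow]

lemma hsNorm_rankOne (x : ∀ j, Fin (n j) → 𝕜) : hsNorm (rankOne x) = ∏ j, vnorm (x j) := by
  have h1 : ∑ i, ‖rankOne x i‖^2 = (∏ j, vnorm (x j))^2 := by
    rw [← Finset.prod_pow]
    simp only [vnorm_sq]
    rw [Finset.prod_univ_sum]
    rw [Fintype.piFinset_univ]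
    exact Finset.sum_congr rfl fun i _ => (norm_rankOne_sq x i)
  rw [hsNorm, h1, Real.sqrt_sq (Finset.prod_nonneg fun j _ => vnorm_nonneg _)]

lemma tinner_smul_left (c : 𝕜) (T Y : (∀ j, Fin (n j)) → 𝕜) :
    tinner (c • T) Y = c * tinner T Y := by
  simp [tinner, Finset.mul_sum, mul_assoc]

lemma tinner_smul_right (c : 𝕜) (T Y : (∀ j, Fin (n j)) → 𝕜) :
    tinner T (c • Y) = (starRingEnd 𝕜 c) * tinner T Y := by
  simp only [tinner, Pi.smul_apply, smul_eq_mul, map_mul, Finset.mul_sum]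
  exact Finset.sum_congr rfl fun i _ => by ring

lemma tinner_conj (T Y : (∀ j, Fin (n j)) → 𝕜) :
    tinner Y T = starRingEnd 𝕜 (tinner T Y) := by
  simp [tinner, map_sum, mul_comm]

lemma norm_tinner_comm (T Y : (∀ j, Fin (n j)) → 𝕜) : ‖tinner Y T‖ = ‖tinner T Y‖ := by
  rw [tinner_conj]; exact RCLike.norm_conj _

lemma tinner_sum_left {m : ℕ} (f : Fin m → (∀ j, Fin (n j)) → 𝕜) (Y : (∀ j, Fin (n j)) → 𝕜) :
    tinner (∑ i, f i) Y = ∑ i, tinner (f i) Y := by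
  simp [tinner, Finset.sum_mul]
  rw [Finset.sum_comm]

def unitFrame (hn : ∀ j, 1 ≤ n j) : ∀ j, Fin (n j) → 𝕜 :=
  fun j i => if i = ⟨0, hn j⟩ then 1 else 0

lemma vnorm_unitFrame (hn : ∀ j, 1 ≤ n j) (j : Fin d) :
    vnorm ((unitFrame hn : ∀ j, Fin (n j) → 𝕜) j) = 1 := by
  unfold vnorm unitFrame
  rw [show ∑ i, ‖if i = (⟨0, hn j⟩ : Fin (n j)) then (1:𝕜) else 0‖^2 = 1 by
    simp [apply_ite, Finset.sum_ite_eq']]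
  exact Real.sqrt_one

lemma specSet_nonempty (hn : ∀ j, 1 ≤ n j) (T : (∀ j, Fin (n j)) → 𝕜) :
    {r : ℝ | ∃ x : ∀ j, Fin (n j) → 𝕜, (∀ j, vnorm (x j) = 1) ∧
      r = ‖tinner T (rankOne x)‖}.Nonempty :=
  ⟨_, unitFrame hn, fun j => vnorm_unitFrame hn j, rfl⟩

lemma specSet_bddAbove (T : (∀ j, Fin (n j)) → 𝕜) :
    BddAbove {r : ℝ | ∃ x : ∀ j, Fin (n j) → 𝕜, (∀ j, vnorm (x j) = 1) ∧
      r = ‖tinner T (rankOne x)‖} := by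
  refine ⟨hsNorm T, fun r hr => ?_⟩
  obtain ⟨x, hx, rfl⟩ := hr
  calc ‖tinner T (rankOne x)‖ ≤ hsNorm T * hsNorm (rankOne x) := norm_tinner_le _ _
  _ = hsNorm T := by rw [hsNorm_rankOne]; simp [hx]

lemma le_specNorm (T : (∀ j, Fin (n j)) → 𝕜) (x : ∀ j, Fin (n j) → 𝕜)
    (hx : ∀ j, vnorm (x j) = 1) : ‖tinner T (rankOne x)‖ ≤ specNorm T :=
  le_csSup (specSet_bddAbove T) ⟨x, hx, rfl⟩

lemma specNorm_le_hsNorm (hn : ∀ j, 1 ≤ n j) (T : (∀ j, Fin (n j)) → 𝕜) :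
    specNorm T ≤ hsNorm T := by
  refine csSup_le (specSet_nonempty hn T) fun r hr => ?_
  obtain ⟨x, hx, rfl⟩ := hr
  calc ‖tinner T (rankOne x)‖ ≤ hsNorm T * hsNorm (rankOne x) := norm_tinner_le _ _
  _ = hsNorm T := by rw [hsNorm_rankOne]; simp [hx]

lemma specNorm_nonneg (hn : ∀ j, 1 ≤ n j) (T : (∀ j, Fin (n j)) → 𝕜) :
    0 ≤ specNorm T :=
  le_trans (norm_nonneg _) (le_specNorm T (unitFrame hn) (vnorm_unitFrame hn))

lemma apply_le_vnorm {k : ℕ} (x : Fin k → 𝕜) (i : Fin k) : ‖x i‖ ≤ vnorm x := by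
  rw [show ‖x i‖ = Real.sqrt (‖x i‖^2) by rw [Real.sqrt_sq (norm_nonneg _)]]
  exact Real.sqrt_le_sqrt (Finset.single_le_sum (f := fun i => ‖x i‖^2)
    (fun i _ => by positivity) (Finset.mem_univ i))

lemma spec_attained (hn : ∀ j, 1 ≤ n j) (T : (∀ j, Fin (n j)) → 𝕜) :
    ∃ x : ∀ j, Fin (n j) → 𝕜, (∀ j, vnorm (x j) = 1) ∧
      specNorm T = ‖tinner T (rankOne x)‖ := by
  set K : Set (∀ j, Fin (n j) → 𝕜) := {x | ∀ j, vnorm (x j) = 1} with hK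
  set f : (∀ j, Fin (n j) → 𝕜) → ℝ := fun x => ‖tinner T (rankOne x)‖ with hf
  have hSimage : {r : ℝ | ∃ x : ∀ j, Fin (n j) → 𝕜, (∀ j, vnorm (x j) = 1) ∧
      r = ‖tinner T (rankOne x)‖} = f '' K := by
    ext r; constructor
    · rintro ⟨x, hx, rfl⟩; exact ⟨x, hx, rfl⟩
    · rintro ⟨x, hx, rfl⟩; exact ⟨x, hx, rfl⟩
  have hvc : ∀ j : Fin d, Continuous fun (x : ∀ j, Fin (n j) → 𝕜) => vnorm (x j) := by
    intro j
    exact Real.continuous_sqrt.comp (continuous_finset_sum _ fun i _ =>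
      (((continuous_apply i).comp (continuous_apply j)).norm.pow 2))
  have hKclosed : IsClosed K := by
    have : K = ⋂ j, {x : ∀ j, Fin (n j) → 𝕜 | vnorm (x j) = 1} := by
      ext x; simp [hK, Set.mem_iInter]
    rw [this]
    exact isClosed_iInter fun j => isClosed_eq (hvc j) continuous_const
  have hKsub : K ⊆ Metric.closedBall 0 1 := by
    intro x hx
    rw [Metric.mem_closedBall, dist_zero_right]
    refine pi_norm_le_iff_of_nonneg zero_le_one |>.2 fun j => ?_
    refine pi_norm_le_iff_of_nonneg zero_le_one |>.2 fun i => ?_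
    calc ‖x j i‖ ≤ vnorm (x j) := apply_le_vnorm _ _
    _ = 1 := hx j
  have hKcompact : IsCompact K :=
    IsCompact.of_isClosed_subset (isCompact_closedBall 0 1) hKclosed hKsub
  have hfc : Continuous f := by
    apply Continuous.norm
    unfold tinner rankOne
    exact continuous_finset_sum _ fun i _ => continuous_const.mul
      ((continuous_finset_prod _ fun j _ =>
        (continuous_apply (i j)).comp (continuous_apply j)).star)
  have hne : (f '' K).Nonempty := ⟨_, ⟨unitFrame hn, vnorm_unitFrame hn, rfl⟩⟩
  have := IsCompact.sSup_mem (hKcompact.image hfc) hne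
  rw [specNorm, hSimage]
  obtain ⟨x, hx, hfx⟩ := this
  exact ⟨x, hx, hfx.symm⟩

lemma tinner_add_left (A B Y : (∀ j, Fin (n j)) → 𝕜) :
    tinner (A + B) Y = tinner A Y + tinner B Y := by
  simp [tinner, add_mul, Finset.sum_add_distrib]

lemma specNorm_smul (hn : ∀ j, 1 ≤ n j) (c : 𝕜) (T : (∀ j, Fin (n j)) → 𝕜) :
    specNorm (c • T) = ‖c‖ * specNorm T := by
  apply le_antisymm
  · refine csSup_le (specSet_nonempty hn _) fun r hr => ?_
    obtain ⟨x, hx, rfl⟩ := hr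
    rw [tinner_smul_left, norm_mul]
    exact mul_le_mul_of_nonneg_left (le_specNorm T x hx) (norm_nonneg c)
  · obtain ⟨x, hx, hfx⟩ := spec_attained hn T
    calc ‖c‖ * specNorm T = ‖tinner (c • T) (rankOne x)‖ := by
          rw [hfx, tinner_smul_left, norm_mul]
    _ ≤ specNorm (c • T) := le_specNorm _ x hx

lemma specNorm_add_le (hn : ∀ j, 1 ≤ n j) (A B : (∀ j, Fin (n j)) → 𝕜) :
    specNorm (A + B) ≤ specNorm A + specNorm B := by
  refine csSup_le (specSet_nonempty hn _) fun r hr => ?_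
  obtain ⟨x, hx, rfl⟩ := hr
  rw [tinner_add_left]
  exact le_trans (norm_add_le _ _)
    (add_le_add (le_specNorm A x hx) (le_specNorm B x hx))

lemma vnorm_single {k : ℕ} (c : 𝕜) (i₀ : Fin k) :
    vnorm (fun i => if i = i₀ then c else 0) = ‖c‖ := by
  unfold vnorm
  rw [show ∑ i, ‖if i = i₀ then c else 0‖^2 = ‖c‖^2 by
    simp [apply_ite, Finset.sum_ite_eq']]
  exact Real.sqrt_sq (norm_nonneg c)

lemma canonical_decomp (hd : 0 < d) (T : (∀ j, Fin (n j)) → 𝕜) :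
    ∃ (m : ℕ) (x : Fin m → ∀ j, Fin (n j) → 𝕜),
      T = (∑ i, rankOne (x i)) ∧ (∑ i, ∏ j, vnorm (x i j)) = ∑ i, ‖T i‖ := by
  classical
  set e : Fin (Fintype.card (∀ j, Fin (n j))) ≃ (∀ j, Fin (n j)) :=
    (Fintype.equivFin (∀ j, Fin (n j))).symm with he
  set j₀ : Fin d := ⟨0, hd⟩ with hj₀
  refine ⟨_, fun k j i => if i = e k j then (if j = j₀ then T (e k) else 1) else 0, ?_, ?_⟩
  · funext i
    have hre : ∀ k, rankOne (fun j (i' : Fin (n j)) =>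
        if i' = e k j then (if j = j₀ then T (e k) else 1) else 0) i
        = if i = e k then T (e k) else 0 := by
      intro k
      unfold rankOne
      have h2 : ∀ j : Fin d, (if i j = e k j then (if j = j₀ then T (e k) else 1) else 0)
          = (if j = j₀ then T (e k) else 1) * (if i j = e k j then 1 else 0) := by
        intro j; by_cases h : i j = e k j <;> simp [h]
      rw [Finset.prod_congr rfl fun j _ => h2 j, Finset.prod_mul_distrib,
        Finset.prod_ite_eq' Finset.univ j₀ (fun j => T (e k)), Finset.prod_boole]
      by_cases h : i = e k
      · simp [h, funext_iff.1 h]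
      · have h3 : ¬ (∀ j ∈ Finset.univ, i j = e k j) := by
          intro hall; exact h (funext fun j => hall j (Finset.mem_univ j))
        simp only [if_neg h, if_neg h3, mul_zero]
    simp only [Finset.sum_apply, hre]
    rw [Equiv.sum_comp e (fun i' => if i = i' then T i' else 0)]
    simp
  · have hval : ∀ k, (∏ j, vnorm (fun i : Fin (n j) =>
        if i = e k j then (if j = j₀ then T (e k) else 1) else 0)) = ‖T (e k)‖ := by
      intro k
      have hv : ∀ j : Fin d, vnorm (fun i : Fin (n j) =>
          if i = e k j then (if j = j₀ then T (e k) else 1) else 0)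
          = if j = j₀ then ‖T (e k)‖ else 1 := by
        intro j
        rw [vnorm_single]
        by_cases h : j = j₀ <;> simp [h]
      rw [Finset.prod_congr rfl fun j _ => hv j,
        Finset.prod_ite_eq' Finset.univ j₀ (fun _ => ‖T (e k)‖)]
      simp
    rw [Finset.sum_congr rfl fun k _ => hval k]
    exact Equiv.sum_comp e fun i => ‖T i‖

lemma nucSet_nonempty (hd : 0 < d) (T : (∀ j, Fin (n j)) → 𝕜) :
    {r : ℝ | ∃ (m : ℕ) (x : Fin m → ∀ j, Fin (n j) → 𝕜),
      T = (∑ i, rankOne (x i)) ∧ r = ∑ i, ∏ j, vnorm (x i j)}.Nonempty := by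
  obtain ⟨m, x, h1, _⟩ := canonical_decomp hd T
  exact ⟨_, m, x, h1, rfl⟩

lemma nucSet_bddBelow (T : (∀ j, Fin (n j)) → 𝕜) :
    BddBelow {r : ℝ | ∃ (m : ℕ) (x : Fin m → ∀ j, Fin (n j) → 𝕜),
      T = (∑ i, rankOne (x i)) ∧ r = ∑ i, ∏ j, vnorm (x i j)} := by
  refine ⟨0, fun r hr => ?_⟩
  obtain ⟨m, x, _, rfl⟩ := hr
  exact Finset.sum_nonneg fun i _ => Finset.prod_nonneg fun j _ => vnorm_nonneg _

lemma nucNorm_nonneg (hd : 0 < d) (T : (∀ j, Fin (n j)) → 𝕜) : 0 ≤ nucNorm T :=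
  le_csInf (nucSet_nonempty hd T) fun r hr => by
    obtain ⟨m, x, _, rfl⟩ := hr
    exact Finset.sum_nonneg fun i _ => Finset.prod_nonneg fun j _ => vnorm_nonneg _

lemma nucNorm_le_of_decomp {m : ℕ} {x : Fin m → ∀ j, Fin (n j) → 𝕜}
    {T : (∀ j, Fin (n j)) → 𝕜} (h : T = ∑ i, rankOne (x i)) :
    nucNorm T ≤ ∑ i, ∏ j, vnorm (x i j) :=
  csInf_le (nucSet_bddBelow T) ⟨m, x, h, rfl⟩

lemma nucNorm_le_sum_norm (hd : 0 < d) (T : (∀ j, Fin (n j)) → 𝕜) :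
    nucNorm T ≤ ∑ i, ‖T i‖ := by
  obtain ⟨m, x, h1, h2⟩ := canonical_decomp hd T
  rw [← h2]
  exact nucNorm_le_of_decomp h1

lemma norm_tinner_rankOne_le (hn : ∀ j, 1 ≤ n j) (Y : (∀ j, Fin (n j)) → 𝕜)
    (x : ∀ j, Fin (n j) → 𝕜) :
    ‖tinner (rankOne x) Y‖ ≤ (∏ j, vnorm (x j)) * specNorm Y := by
  by_cases hz : ∃ j, vnorm (x j) = 0
  · obtain ⟨j, hj⟩ := hz
    have hx0 : x j = 0 := vnorm_eq_zero hj
    have : rankOne x = 0 := by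
      funext i
      have : x j (i j) = 0 := by rw [hx0]; rfl
      exact Finset.prod_eq_zero (Finset.mem_univ j) this
    rw [this]
    have : tinner (0 : (∀ j, Fin (n j)) → 𝕜) Y = 0 := by simp [tinner]
    rw [this, norm_zero]
    exact mul_nonneg (Finset.prod_nonneg fun j _ => vnorm_nonneg _) (specNorm_nonneg hn Y)
  · push_neg at hz
    set u : ∀ j, Fin (n j) → 𝕜 := fun j => ((vnorm (x j) : 𝕜))⁻¹ • x j with hu
    have hvu : ∀ j, vnorm (u j) = 1 := by
      intro j
      rw [hu]
      rw [vnorm_smul, norm_inv, RCLike.norm_ofReal, abs_of_nonneg (vnorm_nonneg _)]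
      exact inv_mul_cancel₀ (hz j)
    have hxu : rankOne x = (∏ j, ((vnorm (x j) : 𝕜))) • rankOne u := by
      have : (fun j => ((vnorm (x j) : 𝕜)) • u j) = x := by
        funext j
        rw [hu]
        simp only []
        rw [smul_smul, mul_inv_cancel₀ (by
          simpa using hz j), one_smul]
      conv_lhs => rw [← this]
      rw [rankOne_smul]
    rw [hxu, tinner_smul_left, norm_mul]
    have h1 : ‖∏ j, ((vnorm (x j)) : 𝕜)‖ = ∏ j, vnorm (x j) := by
      rw [norm_prod]
      exact Finset.prod_congr rfl fun j _ => by
        rw [RCLike.norm_ofReal, abs_of_nonneg (vnorm_nonneg _)]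
    rw [h1]
    refine mul_le_mul_of_nonneg_left ?_ (Finset.prod_nonneg fun j _ => vnorm_nonneg _)
    rw [← norm_tinner_comm]
    exact le_specNorm Y u hvu

lemma norm_tinner_le_nuc_spec (hd : 0 < d) (hn : ∀ j, 1 ≤ n j)
    (T Y : (∀ j, Fin (n j)) → 𝕜) :
    ‖tinner T Y‖ ≤ nucNorm T * specNorm Y := by
  have key : ∀ r ∈ {r : ℝ | ∃ (m : ℕ) (x : Fin m → ∀ j, Fin (n j) → 𝕜),
      T = (∑ i, rankOne (x i)) ∧ r = ∑ i, ∏ j, vnorm (x i j)},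
      ‖tinner T Y‖ ≤ r * specNorm Y := by
    rintro r ⟨m, x, rfl, rfl⟩
    rw [tinner_sum_left, Finset.sum_mul]
    exact le_trans (norm_sum_le _ _) (Finset.sum_le_sum fun i _ =>
      norm_tinner_rankOne_le hn Y (x i))
  rcases lt_or_eq_of_le (specNorm_nonneg hn Y) with hpos | hzero
  · rw [nucNorm, ← div_le_iff₀ hpos] at *
    refine le_csInf (nucSet_nonempty hd _) fun r hr => ?_
    rw [div_le_iff₀ hpos]
    exact key r hr
  · obtain ⟨r, hr⟩ := nucSet_nonempty hd T
    have := key r hr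
    rw [← hzero] at this ⊢
    simpa using this
lemma hsNorm_le_nucNorm (hd : 0 < d) (hn : ∀ j, 1 ≤ n j) (T : (∀ j, Fin (n j)) → 𝕜) :
    hsNorm T ≤ nucNorm T := by
  rcases eq_or_lt_of_le (hsNorm_nonneg T) with hz | hpos
  · rw [← hz]; exact nucNorm_nonneg hd T
  have h1 : hsNorm T ^ 2 ≤ nucNorm T * hsNorm T := by
    calc hsNorm T ^2 = ‖tinner T T‖ := by
          rw [tinner_self, norm_pow, RCLike.norm_ofReal, abs_of_nonneg (hsNorm_nonneg T)]
    _ ≤ nucNorm T * specNorm T := norm_tinner_le_nuc_spec hd hn T T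
    _ ≤ nucNorm T * hsNorm T :=
        mul_le_mul_of_nonneg_left (specNorm_le_hsNorm hn T) (nucNorm_nonneg hd T)
  rw [pow_two] at h1
  exact le_of_mul_le_mul_right h1 hpos

lemma nucNorm_exists_lt (hd : 0 < d) (T : (∀ j, Fin (n j)) → 𝕜) {ε : ℝ} (hε : 0 < ε) :
    ∃ (m : ℕ) (x : Fin m → ∀ j, Fin (n j) → 𝕜),
      T = (∑ i, rankOne (x i)) ∧ (∑ i, ∏ j, vnorm (x i j)) < nucNorm T + ε := by
  have h : nucNorm T < nucNorm T + ε := lt_add_of_pos_right _ hε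
  obtain ⟨r, hr, hlt⟩ := exists_lt_of_csInf_lt (nucSet_nonempty hd T) h
  obtain ⟨m, x, h1, rfl⟩ := hr
  exact ⟨m, x, h1, hlt⟩

lemma smul_decomp_aux (hd : 0 < d) (c : 𝕜) (x : ∀ j, Fin (n j) → 𝕜) :
    ∃ y : ∀ j, Fin (n j) → 𝕜, rankOne y = c • rankOne x ∧
      (∏ j, vnorm (y j)) = ‖c‖ * ∏ j, vnorm (x j) := by
  classical
  set j₀ : Fin d := ⟨0, hd⟩
  refine ⟨fun j => (if j = j₀ then c else 1) • x j, ?_, ?_⟩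
  · rw [rankOne_smul, Finset.prod_ite_eq' Finset.univ j₀ (fun _ => c)]
    simp
  · rw [show (∏ j, vnorm ((if j = j₀ then c else 1) • x j))
        = ∏ j, (if j = j₀ then ‖c‖ else 1) * vnorm (x j) by
      refine Finset.prod_congr rfl fun j _ => ?_
      rw [vnorm_smul]; by_cases h : j = j₀ <;> simp [h]]
    rw [Finset.prod_mul_distrib, Finset.prod_ite_eq' Finset.univ j₀ (fun _ => ‖c‖)]
    simp

lemma nucNorm_smul_le (hd : 0 < d) (c : 𝕜) (T : (∀ j, Fin (n j)) → 𝕜) :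
    nucNorm (c • T) ≤ ‖c‖ * nucNorm T := by
  refine le_of_forall_pos_le_add fun ε hε => ?_
  obtain ⟨m, x, h1, h2⟩ := nucNorm_exists_lt hd T (ε := ε / (‖c‖ + 1))
    (by positivity)
  choose y hy1 hy2 using fun i => smul_decomp_aux hd c (x i)
  have hdec : c • T = ∑ i, rankOne (y i) := by
    rw [h1, Finset.smul_sum]
    exact (Finset.sum_congr rfl fun i _ => hy1 i).symm
  calc nucNorm (c • T) ≤ ∑ i, ∏ j, vnorm (y i j) := nucNorm_le_of_decomp hdec
  _ = ‖c‖ * ∑ i, ∏ j, vnorm (x i j) := by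
      rw [Finset.mul_sum]; exact Finset.sum_congr rfl fun i _ => hy2 i
  _ ≤ ‖c‖ * (nucNorm T + ε / (‖c‖ + 1)) :=
      mul_le_mul_of_nonneg_left (le_of_lt h2) (norm_nonneg c)
  _ ≤ ‖c‖ * nucNorm T + ε := by
      rw [mul_add]
      refine add_le_add le_rfl ?_
      rw [div_eq_mul_inv, ← mul_assoc]
      calc ‖c‖ * ε * (‖c‖ + 1)⁻¹ ≤ (‖c‖ + 1) * ε * (‖c‖ + 1)⁻¹ := by
            have : (0:ℝ) < ‖c‖ + 1 := by positivity
            have h3 : ‖c‖ ≤ ‖c‖ + 1 := by linarith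
            exact mul_le_mul_of_nonneg_right (mul_le_mul_of_nonneg_right h3 hε.le)
              (by positivity)
      _ = ε := by field_simp

lemma nucNorm_add_le (hd : 0 < d) (A B : (∀ j, Fin (n j)) → 𝕜) :
    nucNorm (A + B) ≤ nucNorm A + nucNorm B := by
  refine le_of_forall_pos_le_add fun ε hε => ?_
  obtain ⟨m₁, x₁, hx1, hv1⟩ := nucNorm_exists_lt hd A (half_pos hε)
  obtain ⟨m₂, x₂, hx2, hv2⟩ := nucNorm_exists_lt hd B (half_pos hε)
  set x : Fin (m₁ + m₂) → ∀ j, Fin (n j) → 𝕜 := Fin.addCases x₁ x₂ with hx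
  have hdec : A + B = ∑ i, rankOne (x i) := by
    rw [Fin.sum_univ_add]
    simp only [hx, Fin.addCases_left, Fin.addCases_right]
    rw [hx1, hx2]
  calc nucNorm (A + B) ≤ ∑ i, ∏ j, vnorm (x i j) := nucNorm_le_of_decomp hdec
  _ = (∑ i, ∏ j, vnorm (x₁ i j)) + ∑ i, ∏ j, vnorm (x₂ i j) := by
      rw [Fin.sum_univ_add]
      simp [hx, Fin.addCases_left, Fin.addCases_right]
  _ ≤ (nucNorm A + ε/2) + (nucNorm B + ε/2) := add_le_add hv1.le hv2.le
  _ = nucNorm A + nucNorm B + ε := by ring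

lemma nucNorm_sub_le (hd : 0 < d) (A B : (∀ j, Fin (n j)) → 𝕜) :
    nucNorm A ≤ nucNorm B + nucNorm (A - B) := by
  have := nucNorm_add_le hd B (A - B)
  rwa [add_sub_cancel] at this

lemma hsNorm_le_pi_norm (T : (∀ j, Fin (n j)) → 𝕜) :
    hsNorm T ≤ Real.sqrt (Fintype.card (∀ j, Fin (n j))) * ‖T‖ := by
  rw [hsNorm, ← Real.sqrt_sq (norm_nonneg T), ← Real.sqrt_mul (by positivity)]
  refine Real.sqrt_le_sqrt ?_
  calc ∑ i, ‖T i‖^2 ≤ ∑ _i : (∀ j, Fin (n j)), ‖T‖^2 :=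
        Finset.sum_le_sum fun i _ => pow_le_pow_left₀ (norm_nonneg _)
          (norm_le_pi_norm T i) 2
  _ = (Fintype.card (∀ j, Fin (n j))) * ‖T‖^2 := by
      rw [Finset.sum_const, Finset.card_univ, nsmul_eq_mul]

lemma nucNorm_continuous (hd : 0 < d) :
    Continuous (fun T : (∀ j, Fin (n j)) → 𝕜 => nucNorm T) := by
  have hC : ∀ X : (∀ j, Fin (n j)) → 𝕜, nucNorm X ≤
      (Fintype.card (∀ j, Fin (n j)) : ℝ) * ‖X‖ := by
    intro X
    calc nucNorm X ≤ ∑ i, ‖X i‖ := nucNorm_le_sum_norm hd X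
    _ ≤ ∑ _i : (∀ j, Fin (n j)), ‖X‖ := Finset.sum_le_sum fun i _ => norm_le_pi_norm X i
    _ = _ := by rw [Finset.sum_const, Finset.card_univ, nsmul_eq_mul]
  rw [Metric.continuous_iff]
  intro B ε hε
  set C : ℝ := (Fintype.card (∀ j, Fin (n j)) : ℝ) + 1 with hCdef
  have hCpos : 0 < C := by positivity
  refine ⟨ε / C, by positivity, fun A hA => ?_⟩
  rw [Real.dist_eq]
  have hne : nucNorm (A - B) ≤ C * dist A B := by
    calc nucNorm (A - B) ≤ (Fintype.card (∀ j, Fin (n j)) : ℝ) * ‖A - B‖ := hC _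
    _ ≤ C * ‖A - B‖ := mul_le_mul_of_nonneg_right (by simp [hCdef])
        (norm_nonneg _)
    _ = C * dist A B := by rw [dist_eq_norm]
  have h1 : nucNorm A - nucNorm B ≤ C * dist A B :=
    le_trans (by linarith [nucNorm_sub_le hd A B]) hne
  have hne' : nucNorm (B - A) ≤ C * dist A B := by
    have : B - A = (-1 : 𝕜) • (A - B) := by funext i; simp
    rw [this]
    calc nucNorm ((-1 : 𝕜) • (A - B)) ≤ ‖(-1 : 𝕜)‖ * nucNorm (A - B) :=
          nucNorm_smul_le hd _ _
    _ = nucNorm (A - B) := by simp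
    _ ≤ C * dist A B := hne
  have h2 : nucNorm B - nucNorm A ≤ C * dist A B :=
    le_trans (by linarith [nucNorm_sub_le hd B A]) hne'
  have : |nucNorm A - nucNorm B| ≤ C * dist A B := abs_le.2 ⟨by linarith, h1⟩
  calc |nucNorm A - nucNorm B| ≤ C * dist A B := this
  _ < C * (ε / C) := by
      exact mul_lt_mul_of_pos_left hA hCpos
  _ = ε := by field_simp


lemma riesz_real (f : ((∀ j, Fin (n j)) → 𝕜) →L[ℝ] ℝ) :
    ∃ Y : (∀ j, Fin (n j)) → 𝕜, ∀ X, f X = RCLike.re (tinner X Y) := by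
  classical
  set E : (∀ j, Fin (n j)) → ((∀ j, Fin (n j)) → 𝕜) :=
    fun i i' => if i = i' then 1 else 0 with hE
  refine ⟨fun i => ((f (E i) : ℝ) : 𝕜) + RCLike.I * ((f ((RCLike.I : 𝕜) • E i) : ℝ) : 𝕜),
    fun X => ?_⟩
  have hdecomp : ∀ i, X i • E i
      = (RCLike.re (X i)) • E i + (RCLike.im (X i)) • ((RCLike.I : 𝕜) • E i) := by
    intro i
    funext i'
    simp only [Pi.smul_apply, smul_eq_mul, Pi.add_apply]
    rw [RCLike.real_smul_eq_coe_mul, RCLike.real_smul_eq_coe_mul]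
    by_cases h : i = i'
    · simp only [hE, if_pos h, mul_one]
      exact (RCLike.re_add_im (X i)).symm
    · simp [hE, if_neg h]
  have hfX : f X = ∑ i, (RCLike.re (X i) * f (E i)
      + RCLike.im (X i) * f ((RCLike.I : 𝕜) • E i)) := by
    conv_lhs => rw [pi_eq_sum_univ X, map_sum]
    refine Finset.sum_congr rfl fun i _ => ?_
    rw [show ((X i) • fun j => if i = j then (1:𝕜) else 0) = X i • E i from rfl,
      hdecomp i, map_add, map_smul, map_smul]
    rfl
  rw [hfX, tinner, map_sum]
  refine Finset.sum_congr rfl fun i _ => ?_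
  set a : ℝ := f (E i)
  set b : ℝ := f ((RCLike.I : 𝕜) • E i)
  have hconj : (starRingEnd 𝕜) ((a : 𝕜) + RCLike.I * (b : 𝕜))
      = (a : 𝕜) - RCLike.I * (b : 𝕜) := by
    rw [map_add, map_mul, RCLike.conj_I, RCLike.conj_ofReal, RCLike.conj_ofReal]
    ring
  rw [hconj]
  rw [mul_sub, map_sub]
  rw [show X i * ((a:𝕜)) = (a:𝕜) * X i by ring]
  rw [RCLike.re_ofReal_mul]
  rw [show X i * (RCLike.I * (b:𝕜)) = (b:𝕜) * (X i * RCLike.I) by ring]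
  rw [RCLike.re_ofReal_mul]
  have : RCLike.re (X i * RCLike.I) = - RCLike.im (X i) := by
    rw [RCLike.mul_re, RCLike.I_re, RCLike.I_im]
    ring
  rw [this]
  ring


lemma tinner_zero_right (T : (∀ j, Fin (n j)) → 𝕜) : tinner T 0 = 0 := by simp [tinner]

lemma tinner_zero_left (Y : (∀ j, Fin (n j)) → 𝕜) : tinner 0 Y = 0 := by simp [tinner]

lemma hsNorm_zero : hsNorm (0 : (∀ j, Fin (n j)) → 𝕜) = 0 := by simp [hsNorm]

lemma hsNorm_smul (c : 𝕜) (T : (∀ j, Fin (n j)) → 𝕜) :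
    hsNorm (c • T) = ‖c‖ * hsNorm T := by
  rw [hsNorm_eq, hsNorm_eq]
  rw [show toE (c • T) = c • toE T from rfl, norm_smul]

lemma specNorm_zero (hn : ∀ j, 1 ≤ n j) :
    specNorm (0 : (∀ j, Fin (n j)) → 𝕜) = 0 :=
  le_antisymm (le_trans (specNorm_le_hsNorm hn 0) (le_of_eq hsNorm_zero))
    (specNorm_nonneg hn 0)

lemma nucNorm_zero (hd : 0 < d) : nucNorm (0 : (∀ j, Fin (n j)) → 𝕜) = 0 := by
  refine le_antisymm ?_ (nucNorm_nonneg hd 0)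
  have := nucNorm_le_sum_norm hd (0 : (∀ j, Fin (n j)) → 𝕜)
  simpa using this

lemma nucNorm_rankOne_le (x : ∀ j, Fin (n j) → 𝕜) :
    nucNorm (rankOne x) ≤ ∏ j, vnorm (x j) := by
  have : rankOne x = ∑ _i : Fin 1, rankOne ((fun _ => x) _i) := by simp
  simpa using nucNorm_le_of_decomp (x := fun _ : Fin 1 => x) this

lemma nuSet_bddAbove (hd : 0 < d) (hn : ∀ j, 1 ≤ n j) (T : (∀ j, Fin (n j)) → 𝕜) :
    BddAbove {r : ℝ | ∃ Y : (∀ j, Fin (n j)) → 𝕜, specNorm Y ≤ 1 ∧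
      r = RCLike.re (tinner T Y)} := by
  refine ⟨nucNorm T, fun r hr => ?_⟩
  obtain ⟨Y, hY, rfl⟩ := hr
  calc RCLike.re (tinner T Y) ≤ ‖tinner T Y‖ := RCLike.re_le_norm _
  _ ≤ nucNorm T * specNorm Y := norm_tinner_le_nuc_spec hd hn T Y
  _ ≤ nucNorm T * 1 := mul_le_mul_of_nonneg_left hY (nucNorm_nonneg hd T)
  _ = nucNorm T := mul_one _

lemma nuSet_zero_mem (hn : ∀ j, 1 ≤ n j) (T : (∀ j, Fin (n j)) → 𝕜) :
    (0:ℝ) ∈ {r : ℝ | ∃ Y : (∀ j, Fin (n j)) → 𝕜, specNorm Y ≤ 1 ∧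
      r = RCLike.re (tinner T Y)} :=
  ⟨0, le_of_eq (specNorm_zero hn) |>.trans zero_le_one, by rw [tinner_zero_right]; simp⟩

/-- The crucial Hahn-Banach duality: the nuclear norm is attained as a dual pairing
against an element of the spectral unit ball. -/
lemma nuc_le_nu (hd : 0 < d) (hn : ∀ j, 1 ≤ n j) (T : (∀ j, Fin (n j)) → 𝕜) :
    nucNorm T ≤ sSup {r : ℝ | ∃ Y : (∀ j, Fin (n j)) → 𝕜, specNorm Y ≤ 1 ∧
      r = RCLike.re (tinner T Y)} := by
  classical
  by_contra hlt
  push_neg at hlt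
  set s := sSup {r : ℝ | ∃ Y : (∀ j, Fin (n j)) → 𝕜, specNorm Y ≤ 1 ∧
      r = RCLike.re (tinner T Y)} with hs
  have hs0 : 0 ≤ s := le_csSup (nuSet_bddAbove hd hn T) (nuSet_zero_mem hn T)
  set K : Set ((∀ j, Fin (n j)) → 𝕜) := {X | nucNorm X ≤ s} with hK
  have hconv : Convex ℝ K := by
    rintro X hX Z hZ a b ha hb hab
    have h1 : a • X + b • Z = ((a:𝕜)) • X + ((b:𝕜)) • Z := by
      funext i
      simp only [Pi.add_apply, Pi.smul_apply, smul_eq_mul]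
      rw [RCLike.real_smul_eq_coe_mul, RCLike.real_smul_eq_coe_mul]
    show nucNorm (a • X + b • Z) ≤ s
    rw [h1]
    calc nucNorm (((a:𝕜)) • X + ((b:𝕜)) • Z)
        ≤ nucNorm (((a:𝕜)) • X) + nucNorm (((b:𝕜)) • Z) := nucNorm_add_le hd _ _
    _ ≤ ‖(a:𝕜)‖ * nucNorm X + ‖(b:𝕜)‖ * nucNorm Z :=
        add_le_add (nucNorm_smul_le hd _ _) (nucNorm_smul_le hd _ _)
    _ = a * nucNorm X + b * nucNorm Z := by
        rw [RCLike.norm_ofReal, RCLike.norm_ofReal, abs_of_nonneg ha, abs_of_nonneg hb]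
    _ ≤ a * s + b * s := add_le_add
        (mul_le_mul_of_nonneg_left hX ha) (mul_le_mul_of_nonneg_left hZ hb)
    _ = s := by rw [← add_mul, hab, one_mul]
  have hclosed : IsClosed K := isClosed_Iic.preimage (nucNorm_continuous hd)
  have hTout : T ∉ K := by rw [hK]; simpa using hlt
  obtain ⟨f, u, hfK, hfT⟩ := geometric_hahn_banach_closed_point hconv hclosed hTout
  obtain ⟨Y, hfY⟩ := riesz_real f
  have h0K : (0 : (∀ j, Fin (n j)) → 𝕜) ∈ K := by
    show nucNorm (0 : (∀ j, Fin (n j)) → 𝕜) ≤ s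
    rw [nucNorm_zero hd]; exact hs0
  have hu0 : 0 < u := by
    have := hfK 0 h0K
    rwa [map_zero] at this
  have hfT' : u < RCLike.re (tinner T Y) := by rwa [hfY] at hfT
  rcases eq_or_lt_of_le (specNorm_nonneg hn Y) with hY0 | hYpos
  · -- spec Y = 0 : contradiction
    have : RCLike.re (tinner T Y) ≤ 0 := by
      calc RCLike.re (tinner T Y) ≤ ‖tinner T Y‖ := RCLike.re_le_norm _
      _ ≤ nucNorm T * specNorm Y := norm_tinner_le_nuc_spec hd hn T Y
      _ = 0 := by rw [← hY0, mul_zero]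
    linarith
  · -- spec Y > 0
    have claim2 : RCLike.re (tinner T Y) ≤ s * specNorm Y := by
      set c : 𝕜 := (((specNorm Y)⁻¹ : ℝ) : 𝕜) with hc
      have hspecZ : specNorm (c • Y) = 1 := by
        rw [specNorm_smul hn, hc, RCLike.norm_ofReal,
          abs_of_nonneg (inv_nonneg.2 (le_of_lt hYpos)), inv_mul_cancel₀ (ne_of_gt hYpos)]
      have hmem : RCLike.re (tinner T (c • Y)) ∈ {r : ℝ | ∃ Y : (∀ j, Fin (n j)) → 𝕜,
          specNorm Y ≤ 1 ∧ r = RCLike.re (tinner T Y)} :=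
        ⟨c • Y, le_of_eq hspecZ, rfl⟩
      have hle : RCLike.re (tinner T (c • Y)) ≤ s := le_csSup (nuSet_bddAbove hd hn T) hmem
      have hre : RCLike.re (tinner T (c • Y)) = (specNorm Y)⁻¹ * RCLike.re (tinner T Y) := by
        rw [tinner_smul_right, hc, RCLike.conj_ofReal, RCLike.re_ofReal_mul]
      rw [hre] at hle
      calc RCLike.re (tinner T Y) = specNorm Y * ((specNorm Y)⁻¹ * RCLike.re (tinner T Y)) := by
            field_simp
      _ ≤ specNorm Y * s := mul_le_mul_of_nonneg_left hle (le_of_lt hYpos)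
      _ = s * specNorm Y := mul_comm _ _
    have claim1 : s * specNorm Y < u := by
      rcases eq_or_lt_of_le hs0 with hseq | hspos
      · rw [← hseq, zero_mul]; exact hu0
      · obtain ⟨x, hx, hat⟩ := spec_attained hn Y
        set z : 𝕜 := tinner (rankOne x) Y with hz
        have hzn : ‖z‖ = specNorm Y := by rw [hz, norm_tinner_comm]; exact hat.symm
        have hzne : z ≠ 0 := by
          intro h0
          rw [h0, norm_zero] at hzn
          exact (ne_of_gt hYpos) hzn.symm
        set c : 𝕜 := (‖z‖ : 𝕜) / z with hc
        have hcz : c * z = (‖z‖ : 𝕜) := by rw [hc, div_mul_cancel₀ _ hzne]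
        have hcn : ‖c‖ = 1 := by
          rw [hc, norm_div, RCLike.norm_ofReal, abs_of_nonneg (norm_nonneg _),
            div_self (norm_ne_zero_iff.2 hzne)]
        set X₀ : (∀ j, Fin (n j)) → 𝕜 := ((s:𝕜) * c) • rankOne x with hX₀
        have hX₀K : X₀ ∈ K := by
          show nucNorm X₀ ≤ s
          calc nucNorm X₀ ≤ ‖(s:𝕜) * c‖ * nucNorm (rankOne x) := nucNorm_smul_le hd _ _
          _ ≤ ‖(s:𝕜) * c‖ * ∏ j, vnorm (x j) :=
              mul_le_mul_of_nonneg_left (nucNorm_rankOne_le x) (norm_nonneg _)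
          _ = s := by
              rw [norm_mul, hcn, RCLike.norm_ofReal, abs_of_nonneg hs0]
              simp [hx]
        have hfX₀ : f X₀ < u := hfK X₀ hX₀K
        have : f X₀ = s * specNorm Y := by
          rw [hfY, hX₀, tinner_smul_left, ← hz, mul_assoc, hcz, ← RCLike.ofReal_mul,
            RCLike.ofReal_re, hzn]
        linarith
    linarith


lemma apply_le_hsNorm (T : (∀ j, Fin (n j)) → 𝕜) (i : ∀ j, Fin (n j)) :
    ‖T i‖ ≤ hsNorm T := by
  rw [show ‖T i‖ = Real.sqrt (‖T i‖^2) by rw [Real.sqrt_sq (norm_nonneg _)]]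
  exact Real.sqrt_le_sqrt (Finset.single_le_sum (f := fun i => ‖T i‖^2)
    (fun i _ => by positivity) (Finset.mem_univ i))

lemma pi_norm_le_hsNorm (T : (∀ j, Fin (n j)) → 𝕜) : ‖T‖ ≤ hsNorm T :=
  pi_norm_le_iff_of_nonneg (hsNorm_nonneg T) |>.2 fun i => apply_le_hsNorm T i

lemma nucNorm_le_card_hsNorm (hd : 0 < d) (T : (∀ j, Fin (n j)) → 𝕜) :
    nucNorm T ≤ (Fintype.card (∀ j, Fin (n j)) : ℝ) * hsNorm T := by
  calc nucNorm T ≤ ∑ i, ‖T i‖ := nucNorm_le_sum_norm hd T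
  _ ≤ ∑ _i : (∀ j, Fin (n j)), hsNorm T := Finset.sum_le_sum fun i _ => apply_le_hsNorm T i
  _ = _ := by rw [Finset.sum_const, Finset.card_univ, nsmul_eq_mul]

lemma hsNorm_le_card_specNorm (hd : 0 < d) (hn : ∀ j, 1 ≤ n j) (T : (∀ j, Fin (n j)) → 𝕜) :
    hsNorm T ≤ (Fintype.card (∀ j, Fin (n j)) : ℝ) * specNorm T := by
  rcases eq_or_lt_of_le (hsNorm_nonneg T) with hz | hpos
  · rw [← hz]
    exact mul_nonneg (Nat.cast_nonneg _) (specNorm_nonneg hn T)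
  have h1 : hsNorm T ^ 2 ≤ ((Fintype.card (∀ j, Fin (n j)) : ℝ) * specNorm T) * hsNorm T := by
    calc hsNorm T ^2 = ‖tinner T T‖ := by
          rw [tinner_self, norm_pow, RCLike.norm_ofReal, abs_of_nonneg (hsNorm_nonneg T)]
    _ ≤ nucNorm T * specNorm T := norm_tinner_le_nuc_spec hd hn T T
    _ ≤ ((Fintype.card (∀ j, Fin (n j)) : ℝ) * hsNorm T) * specNorm T :=
        mul_le_mul_of_nonneg_right (nucNorm_le_card_hsNorm hd T) (specNorm_nonneg hn T)
    _ = ((Fintype.card (∀ j, Fin (n j)) : ℝ) * specNorm T) * hsNorm T := by ring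
  rw [pow_two] at h1
  exact le_of_mul_le_mul_right h1 hpos

lemma specNorm_continuous (hn : ∀ j, 1 ≤ n j) :
    Continuous (fun T : (∀ j, Fin (n j)) → 𝕜 => specNorm T) := by
  have key : ∀ A B : (∀ j, Fin (n j)) → 𝕜, specNorm A - specNorm B ≤
      Real.sqrt (Fintype.card (∀ j, Fin (n j))) * ‖A - B‖ := by
    intro A B
    have h1 : specNorm A ≤ specNorm B + specNorm (A - B) := by
      have := specNorm_add_le hn B (A - B)
      rwa [add_sub_cancel] at this
    have h2 : specNorm (A - B) ≤ hsNorm (A - B) := specNorm_le_hsNorm hn _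
    have h3 := hsNorm_le_pi_norm (A - B)
    linarith
  rw [Metric.continuous_iff]
  intro B ε hε
  set C : ℝ := Real.sqrt (Fintype.card (∀ j, Fin (n j))) + 1 with hC
  have hCpos : (0:ℝ) < C := by positivity
  refine ⟨ε / C, by positivity, fun A hA => ?_⟩
  rw [Real.dist_eq]
  have hCb : Real.sqrt (Fintype.card (∀ j, Fin (n j))) ≤ C := by rw [hC]; linarith
  have hd1 : specNorm A - specNorm B ≤ C * dist A B := by
    calc specNorm A - specNorm B ≤ Real.sqrt (Fintype.card (∀ j, Fin (n j))) * ‖A - B‖ :=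
          key A B
    _ ≤ C * ‖A - B‖ := mul_le_mul_of_nonneg_right hCb (norm_nonneg _)
    _ = C * dist A B := by rw [dist_eq_norm]
  have hd2 : specNorm B - specNorm A ≤ C * dist A B := by
    calc specNorm B - specNorm A ≤ Real.sqrt (Fintype.card (∀ j, Fin (n j))) * ‖B - A‖ :=
          key B A
    _ ≤ C * ‖B - A‖ := mul_le_mul_of_nonneg_right hCb (norm_nonneg _)
    _ = C * dist A B := by rw [← dist_eq_norm, dist_comm]
  calc |specNorm A - specNorm B| ≤ C * dist A B := abs_le.2 ⟨by linarith, hd1⟩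
  _ < C * (ε / C) := mul_lt_mul_of_pos_left hA hCpos
  _ = ε := by field_simp

lemma tinner_re_continuous (T : (∀ j, Fin (n j)) → 𝕜) :
    Continuous (fun Y : (∀ j, Fin (n j)) → 𝕜 => RCLike.re (tinner T Y)) := by
  apply RCLike.continuous_re.comp
  unfold tinner
  exact continuous_finset_sum _ fun i _ => continuous_const.mul (continuous_apply i).star

lemma nu_attained (hd : 0 < d) (hn : ∀ j, 1 ≤ n j) (T : (∀ j, Fin (n j)) → 𝕜) :
    ∃ Y : (∀ j, Fin (n j)) → 𝕜, specNorm Y ≤ 1 ∧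
      RCLike.re (tinner T Y) = nucNorm T := by
  set B : Set ((∀ j, Fin (n j)) → 𝕜) := {Y | specNorm Y ≤ 1} with hB
  have hBclosed : IsClosed B := isClosed_Iic.preimage (specNorm_continuous hn)
  have hBsub : B ⊆ Metric.closedBall 0 ((Fintype.card (∀ j, Fin (n j)) : ℝ)) := by
    intro Y hY
    rw [Metric.mem_closedBall, dist_zero_right]
    calc ‖Y‖ ≤ hsNorm Y := pi_norm_le_hsNorm Y
    _ ≤ (Fintype.card (∀ j, Fin (n j)) : ℝ) * specNorm Y :=
        hsNorm_le_card_specNorm hd hn Y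
    _ ≤ (Fintype.card (∀ j, Fin (n j)) : ℝ) * 1 :=
        mul_le_mul_of_nonneg_left hY (by positivity)
    _ = _ := mul_one _
  have hBcompact : IsCompact B :=
    IsCompact.of_isClosed_subset (isCompact_closedBall _ _) hBclosed hBsub
  have himg : {r : ℝ | ∃ Y : (∀ j, Fin (n j)) → 𝕜, specNorm Y ≤ 1 ∧
      r = RCLike.re (tinner T Y)} = (fun Y => RCLike.re (tinner T Y)) '' B := by
    ext r; constructor
    · rintro ⟨Y, hY, rfl⟩; exact ⟨Y, hY, rfl⟩
    · rintro ⟨Y, hY, rfl⟩; exact ⟨Y, hY, rfl⟩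
  have hne : ((fun Y => RCLike.re (tinner T Y)) '' B).Nonempty := by
    rw [← himg]; exact ⟨0, nuSet_zero_mem hn T⟩
  have hmem := IsCompact.sSup_mem (hBcompact.image (tinner_re_continuous T)) hne
  rw [← himg] at hmem
  obtain ⟨Y, hY, hre⟩ := hmem
  refine ⟨Y, hY, ?_⟩
  rw [← hre]
  refine le_antisymm ?_ (nuc_le_nu hd hn T)
  refine csSup_le ⟨0, nuSet_zero_mem hn T⟩ fun r hr => ?_
  obtain ⟨Z, hZ, rfl⟩ := hr
  calc RCLike.re (tinner T Z) ≤ ‖tinner T Z‖ := RCLike.re_le_norm _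
  _ ≤ nucNorm T * specNorm Z := norm_tinner_le_nuc_spec hd hn T Z
  _ ≤ nucNorm T * 1 := mul_le_mul_of_nonneg_left hZ (nucNorm_nonneg hd T)
  _ = nucNorm T := mul_one _


end Aux

/-- For `d ≥ 3` and `T` of Hilbert–Schmidt norm one: if `‖T‖₁ = α(n,𝕜)`
or `‖T‖_∞ = β(n,𝕜)` then `‖T‖₁·‖T‖_∞ = 1`; in particular `‖T‖₁ = α(n,𝕜)` iff
`‖T‖_∞ = β(n,𝕜)`. -/
theorem stmt3 (𝕜 : Type*) [RCLike 𝕜] (d : ℕ) (hd : 3 ≤ d) (n : Fin d → ℕ)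
    (hn : ∀ j, 1 ≤ n j) (T : (∀ j, Fin (n j)) → 𝕜) (hT : hsNorm T = 1) :
    ((nucNorm T = alphaN 𝕜 d n ∨ specNorm T = betaN 𝕜 d n) →
      nucNorm T * specNorm T = 1) ∧
    (nucNorm T = alphaN 𝕜 d n ↔ specNorm T = betaN 𝕜 d n) := by
 
  have hd0 : 0 < d := lt_of_lt_of_le (by norm_num) hd
  set N : ℝ := (Fintype.card (∀ j, Fin (n j)) : ℝ) with hN
  have hN1 : (1:ℝ) ≤ N := by
    rw [hN]
    haveI : Nonempty (∀ j, Fin (n j)) := ⟨fun j => ⟨0, hn j⟩⟩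
    exact_mod_cast Fintype.card_pos
  have hSA_ne : {r : ℝ | ∃ S : (∀ j, Fin (n j)) → 𝕜, hsNorm S = 1 ∧
      r = nucNorm S}.Nonempty := ⟨_, T, hT, rfl⟩
  have hSA_bdd : BddAbove {r : ℝ | ∃ S : (∀ j, Fin (n j)) → 𝕜, hsNorm S = 1 ∧
      r = nucNorm S} := by
    refine ⟨N, ?_⟩
    rintro r ⟨S, hS, rfl⟩
    have := nucNorm_le_card_hsNorm hd0 S
    rw [hS, mul_one] at this
    exact this
  have hSB_ne : {r : ℝ | ∃ S : (∀ j, Fin (n j)) → 𝕜, hsNorm S = 1 ∧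
      r = specNorm S}.Nonempty := ⟨_, T, hT, rfl⟩
  have hSB_bdd : BddBelow {r : ℝ | ∃ S : (∀ j, Fin (n j)) → 𝕜, hsNorm S = 1 ∧
      r = specNorm S} := by
    refine ⟨0, ?_⟩
    rintro r ⟨S, hS, rfl⟩
    exact specNorm_nonneg hn S
  have hβlow : 1/N ≤ betaN 𝕜 d n := by
    refine le_csInf hSB_ne ?_
    rintro r ⟨S, hS, rfl⟩
    have h1 := hsNorm_le_card_specNorm hd0 hn S
    rw [hS] at h1
    rw [div_le_iff₀ (by linarith : (0:ℝ) < N)]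
    linarith [mul_comm N (specNorm S)]
  have hβpos : 0 < betaN 𝕜 d n := lt_of_lt_of_le (by positivity) hβlow
  have hαT : nucNorm T ≤ alphaN 𝕜 d n := le_csSup hSA_bdd ⟨T, hT, rfl⟩
  have hβT : betaN 𝕜 d n ≤ specNorm T := csInf_le hSB_bdd ⟨T, hT, rfl⟩
  have hprod : ∀ S : (∀ j, Fin (n j)) → 𝕜, hsNorm S = 1 →
      1 ≤ nucNorm S * specNorm S := by
    intro S hS
    calc (1:ℝ) = hsNorm S ^ 2 := by rw [hS]; norm_num
    _ = ‖tinner S S‖ := by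
        rw [tinner_self, norm_pow, RCLike.norm_ofReal, abs_of_nonneg (hsNorm_nonneg S)]
    _ ≤ nucNorm S * specNorm S := norm_tinner_le_nuc_spec hd0 hn S S
  have hhsY_le : ∀ Y : (∀ j, Fin (n j)) → 𝕜, specNorm Y ≤ 1 →
      hsNorm Y ≤ 1 / betaN 𝕜 d n := by
    intro Y hY
    rcases eq_or_lt_of_le (hsNorm_nonneg Y) with hz | hpos
    · rw [← hz]; positivity
    set U : (∀ j, Fin (n j)) → 𝕜 := (((hsNorm Y)⁻¹ : ℝ) : 𝕜) • Y with hU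
    have hUhs : hsNorm U = 1 := by
      rw [hU, hsNorm_smul, RCLike.norm_ofReal,
        abs_of_nonneg (inv_nonneg.2 (le_of_lt hpos)), inv_mul_cancel₀ (ne_of_gt hpos)]
    have hβU : betaN 𝕜 d n ≤ specNorm U := csInf_le hSB_bdd ⟨U, hUhs, rfl⟩
    have hUspec : specNorm U ≤ (hsNorm Y)⁻¹ := by
      rw [hU, specNorm_smul hn, RCLike.norm_ofReal,
        abs_of_nonneg (inv_nonneg.2 (le_of_lt hpos))]
      calc (hsNorm Y)⁻¹ * specNorm Y ≤ (hsNorm Y)⁻¹ * 1 :=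
            mul_le_mul_of_nonneg_left hY (inv_nonneg.2 (le_of_lt hpos))
      _ = (hsNorm Y)⁻¹ := mul_one _
    have h2 : betaN 𝕜 d n ≤ (hsNorm Y)⁻¹ := le_trans hβU hUspec
    rw [le_div_iff₀ hβpos]
    calc hsNorm Y * betaN 𝕜 d n ≤ hsNorm Y * (hsNorm Y)⁻¹ :=
          mul_le_mul_of_nonneg_left h2 (le_of_lt hpos)
    _ = 1 := mul_inv_cancel₀ (ne_of_gt hpos)
  have key2 : ∀ S : (∀ j, Fin (n j)) → 𝕜, hsNorm S = 1 →
      nucNorm S ≤ 1 / betaN 𝕜 d n := by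
    intro S hS
    obtain ⟨Y, hY, hre⟩ := nu_attained hd0 hn S
    calc nucNorm S = RCLike.re (tinner S Y) := hre.symm
    _ ≤ ‖tinner S Y‖ := RCLike.re_le_norm _
    _ ≤ hsNorm S * hsNorm Y := norm_tinner_le S Y
    _ = hsNorm Y := by rw [hS, one_mul]
    _ ≤ 1 / betaN 𝕜 d n := hhsY_le Y hY
  have hαβle : alphaN 𝕜 d n ≤ 1 / betaN 𝕜 d n := by
    refine csSup_le hSA_ne ?_
    rintro r ⟨S, hS, rfl⟩
    exact key2 S hS
  have hα1 : 1 ≤ alphaN 𝕜 d n := by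
    have h1 : hsNorm T ≤ nucNorm T := hsNorm_le_nucNorm hd0 hn T
    rw [hT] at h1
    linarith
  have hαpos : 0 < alphaN 𝕜 d n := by linarith
  have hβα : 1 / alphaN 𝕜 d n ≤ betaN 𝕜 d n := by
    refine le_csInf hSB_ne ?_
    rintro r ⟨S, hS, rfl⟩
    have h1 := hprod S hS
    have h2 : nucNorm S ≤ alphaN 𝕜 d n := le_csSup hSA_bdd ⟨S, hS, rfl⟩
    have h3 : 0 ≤ specNorm S := specNorm_nonneg hn S
    rw [div_le_iff₀ hαpos]
    nlinarith
  have hαβ : alphaN 𝕜 d n * betaN 𝕜 d n = 1 := by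
    have h1 : alphaN 𝕜 d n * betaN 𝕜 d n ≤ 1 := by
      have := mul_le_mul_of_nonneg_right hαβle (le_of_lt hβpos)
      rwa [div_mul_cancel₀ 1 (ne_of_gt hβpos)] at this
    have h2 : 1 ≤ alphaN 𝕜 d n * betaN 𝕜 d n := by
      have := mul_le_mul_of_nonneg_left hβα (le_of_lt hαpos)
      rwa [mul_div_cancel₀ 1 (ne_of_gt hαpos)] at this
    linarith
  have hαinv : alphaN 𝕜 d n = 1 / betaN 𝕜 d n := by
    field_simp
    linarith [hαβ]
  -- direction A : spec extremal → nuc extremal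
  have dirA : specNorm T = betaN 𝕜 d n → nucNorm T = alphaN 𝕜 d n := by
    intro hspec
    have h1 := hprod T hT
    rw [hspec] at h1
    have h2 : alphaN 𝕜 d n ≤ nucNorm T := by
      rw [hαinv, div_le_iff₀ hβpos]
      linarith
    linarith
  -- direction B : nuc extremal → spec extremal
  have dirB : nucNorm T = alphaN 𝕜 d n → specNorm T = betaN 𝕜 d n := by
    intro hnuc
    obtain ⟨Y, hY, hre⟩ := nu_attained hd0 hn T
    have hα_le : alphaN 𝕜 d n ≤ hsNorm Y := by
      calc alphaN 𝕜 d n = RCLike.re (tinner T Y) := by rw [hre, hnuc]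
      _ ≤ ‖tinner T Y‖ := RCLike.re_le_norm _
      _ ≤ hsNorm T * hsNorm Y := norm_tinner_le T Y
      _ = hsNorm Y := by rw [hT, one_mul]
    have hhsY : hsNorm Y = alphaN 𝕜 d n := by
      have := hhsY_le Y hY
      rw [← hαinv] at this
      linarith
    have hYT : Y = ((alphaN 𝕜 d n : ℝ) : 𝕜) • T := by
      have hz : hsNorm (Y - ((alphaN 𝕜 d n : ℝ) : 𝕜) • T) = 0 := by
        have hsq : hsNorm (Y - ((alphaN 𝕜 d n : ℝ) : 𝕜) • T) ^ 2 = 0 := by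
          have he1 : hsNorm (Y - ((alphaN 𝕜 d n : ℝ) : 𝕜) • T) = ‖toE Y - ((alphaN 𝕜 d n : ℝ) : 𝕜) • toE T‖ := by
            rw [hsNorm_eq]
            rfl
          rw [he1, norm_sub_sq (𝕜 := 𝕜)]
          have hi : @inner 𝕜 _ _ (toE Y) (((alphaN 𝕜 d n : ℝ) : 𝕜) • toE T)
              = ((alphaN 𝕜 d n : ℝ) : 𝕜) * tinner T Y := by
            rw [inner_smul_right, tinner_eq]
          rw [hi]
          rw [RCLike.re_ofReal_mul, hre, hnuc]
          rw [norm_smul, RCLike.norm_ofReal, abs_of_nonneg (le_of_lt hαpos)]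
          rw [← hsNorm_eq, ← hsNorm_eq, hhsY, hT]
          ring
        have := pow_eq_zero_iff (n := 2) (by norm_num) |>.1 hsq
        exact this
      have := hsNorm_eq_zero hz
      have h0 : Y - ((alphaN 𝕜 d n : ℝ) : 𝕜) • T = 0 := this
      have := sub_eq_zero.1 h0
      exact this
    have hspecY : specNorm Y = alphaN 𝕜 d n * specNorm T := by
      rw [hYT, specNorm_smul hn, RCLike.norm_ofReal, abs_of_nonneg (le_of_lt hαpos)]
    have hsT_le : specNorm T ≤ betaN 𝕜 d n := by
      have h1 : alphaN 𝕜 d n * specNorm T ≤ 1 := by rw [← hspecY]; exact hY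
      have h2 : betaN 𝕜 d n = 1 / alphaN 𝕜 d n := by
        rw [eq_div_iff (ne_of_gt hαpos)]
        linarith [hαβ]
      rw [h2, le_div_iff₀ hαpos]
      linarith
    linarith
  have hfinal : (nucNorm T = alphaN 𝕜 d n ∨ specNorm T = betaN 𝕜 d n) →
      nucNorm T * specNorm T = 1 := by
    rintro (h | h)
    · have h2 := dirB h
      rw [h, h2, hαβ]
    · have h2 := dirA h
      rw [h, h2, hαβ]
  exact ⟨hfinal, ⟨dirB, dirA⟩⟩
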